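/- Fix a real number m > 1 and a natural number n ≥ 3. If (X, Y, W) ∈ ℝ³ satisfies X > 0, Y > 0, W > 0, X² + Y² + W² = 1, and the right-hand side of the Böhm system vanishes at (X, Y, W), then (X, Y, W) = K, where K = (√((n−1)/(m(m+n−2))), √((m−1)(n−1)/(m(m+n−2))), √((m−1)/(m+n−2))). (This is the assertion in the proof of Theorem 5.7 of the paper that K is the only fixed point of the system on the unit sphere in the open first octant.) -/

import Mathlib

noncomputable section

/-- The assertion in the proof of Theorem 5.7 of the paper that
`K = (√((n−1)/(m(m+n−2))), √((m−1)(n−1)/(m(m+n−2))), √((m−1)/(m+n−2)))` is the only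
fixed point of the Böhm system on the unit sphere in the open first octant. -/
theorem boehm_unique_fixed_point (m : ℝ) (hm : 1 < m) (n : ℕ) (hn : 3 ≤ n)
    (c : ℝ) (hc : c = (1 / (m - 1)) * Real.sqrt (m * (m + n - 2) / (n - 1)))
    (X Y W : ℝ) (hX : 0 < X) (hY : 0 < Y) (hW : 0 < W)
    (hsphere : X ^ 2 + Y ^ 2 + W ^ 2 = 1)
    (h1 : X * (X ^ 2 - Y ^ 2 / (m - 1)) + c * Y ^ 2 - X = 0)
    (h2 : Y * (X ^ 2 - Y ^ 2 / (m - 1)) - c * X * Y + Y / (m - 1) = 0)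
    (h3 : W * (X ^ 2 - Y ^ 2 / (m - 1)) = 0) :
    X = Real.sqrt ((n - 1) / (m * (m + n - 2))) ∧
      Y = Real.sqrt ((m - 1) * (n - 1) / (m * (m + n - 2))) ∧
      W = Real.sqrt ((m - 1) / (m + n - 2)) := by
  have hn3 : (3:ℝ) ≤ (n:ℝ) := by exact_mod_cast hn
  have hm1 : (0:ℝ) < m - 1 := by linarith
  have hmn : (0:ℝ) < m + n - 2 := by linarith
  have hn1 : (0:ℝ) < (n:ℝ) - 1 := by linarith
  have hmpos : (0:ℝ) < m := by linarith
  -- from h3 and W > 0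
  have hs : X ^ 2 - Y ^ 2 / (m - 1) = 0 := by
    rcases mul_eq_zero.mp h3 with h | h
    · exact absurd h hW.ne'
    · exact h
  rw [hs] at h1 h2
  have hcY : c * Y ^ 2 = X := by linarith [h1]
  have hcX : c * X = 1 / (m - 1) := by
    have h2' : (c * X) * Y = (1 / (m - 1)) * Y := by ring_nf; ring_nf at h2; linarith
    exact mul_right_cancel₀ hY.ne' h2'
  have hq : (0:ℝ) ≤ m * (m + (n:ℝ) - 2) / ((n:ℝ) - 1) := by positivity
  have hcsq : c ^ 2 = m * (m + (n:ℝ) - 2) / (((n:ℝ) - 1) * (m - 1) ^ 2) := by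
    rw [hc, mul_pow, Real.sq_sqrt hq]
    field_simp
  -- X²
  have hX2 : X ^ 2 = ((n:ℝ) - 1) / (m * (m + (n:ℝ) - 2)) := by
    have h : c ^ 2 * X ^ 2 = (1 / (m - 1)) ^ 2 := by
      rw [← mul_pow, hcX]
    rw [hcsq] at h
    field_simp at h ⊢
    nlinarith [h]
  have hY2 : Y ^ 2 = (m - 1) * ((n:ℝ) - 1) / (m * (m + (n:ℝ) - 2)) := by
    have : Y ^ 2 = (m - 1) * X ^ 2 := by
      field_simp at hs; linarith
    rw [this, hX2]; ring
  have hW2 : W ^ 2 = (m - 1) / (m + (n:ℝ) - 2) := by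
    have : W ^ 2 = 1 - X ^ 2 - Y ^ 2 := by linarith
    rw [this, hX2, hY2]
    field_simp
    ring
  refine ⟨?_, ?_, ?_⟩
  · rw [← hX2, Real.sqrt_sq hX.le]
  · rw [← hY2, Real.sqrt_sq hY.le]
  · rw [← hW2, Real.sqrt_sq hW.le]

end
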